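/- Let 0 < α ≤ β, let a : (0,1) → [α,β] be measurable, and let r ∈ L^∞(0,1). Define d₁ := ⟨a⁻¹⟩⁻²·[⟨a·r²⟩ − ⟨a⟩⁻¹·⟨a·r⟩²], d₂ := ⟨a³·r²⟩ − ⟨a⟩⁻¹·⟨a²·r⟩², and d₃ := ⟨a⁻¹⟩⁻¹·[⟨a²·r²⟩ − ⟨a⟩⁻¹·⟨a·r⟩·⟨a²·r⟩]. For real numbers u, v, the matrix [[d₁·v², d₃·u·v, 0], [d₃·u·v, d₂·u², 0], [0, 0, d₂·u²]] is the zero matrix if and only if one of the following holds: (i) u = v = 0; (ii) u = 0, v ≠ 0 and r is constant almost everywhere; (iii) u ≠ 0, v = 0 and a·r is constant almost everywhere; (iv) u ≠ 0, v ≠ 0 and both r and a·r are constant almost everywhere. -/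

import Mathlib

open MeasureTheory

/-- Average over the unit interval `(0,1)`. -/
noncomputable def avg01 (f : ℝ → ℝ) : ℝ := ∫ y in Set.Ioo (0 : ℝ) 1, f y

/-- `d₁ = ⟨a⁻¹⟩⁻²[⟨a r²⟩ − ⟨a⟩⁻¹⟨a r⟩²]`. -/
noncomputable def dOne (a r : ℝ → ℝ) : ℝ :=
  ((avg01 fun y => (a y)⁻¹) ^ 2)⁻¹ *
    ((avg01 fun y => a y * r y ^ 2) - (avg01 a)⁻¹ * (avg01 fun y => a y * r y) ^ 2)

/-- `d₂ = ⟨a³ r²⟩ − ⟨a⟩⁻¹⟨a² r⟩²`. -/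
noncomputable def dTwo (a r : ℝ → ℝ) : ℝ :=
  (avg01 fun y => a y ^ 3 * r y ^ 2) - (avg01 a)⁻¹ * (avg01 fun y => a y ^ 2 * r y) ^ 2

/-- `d₃ = ⟨a⁻¹⟩⁻¹[⟨a² r²⟩ − ⟨a⟩⁻¹⟨a r⟩⟨a² r⟩]`. -/
noncomputable def dThree (a r : ℝ → ℝ) : ℝ :=
  (avg01 fun y => (a y)⁻¹)⁻¹ *
    ((avg01 fun y => a y ^ 2 * r y ^ 2) -
      (avg01 a)⁻¹ * (avg01 fun y => a y * r y) * (avg01 fun y => a y ^ 2 * r y))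

-- auxiliary lemmas
lemma integrable_of_bdd {μ : Measure ℝ} [IsFiniteMeasure μ] {f : ℝ → ℝ} (hf : Measurable f)
    {B : ℝ} (hB : ∀ᵐ y ∂μ, |f y| ≤ B) : Integrable f μ :=
  Integrable.mono' (integrable_const B) hf.aestronglyMeasurable (by simpa using hB)

lemma variance_zero_iff (μ : Measure ℝ) [IsFiniteMeasure μ]
    (a g : ℝ → ℝ) (hma : Measurable a) (hmg : Measurable g)
    (α β C : ℝ) (hα : 0 < α)
    (hab : ∀ᵐ y ∂μ, α ≤ a y ∧ a y ≤ β)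
    (hC : ∀ᵐ y ∂μ, |g y| ≤ C)
    (hμ : (μ Set.univ).toReal = 1) :
    (∫ y, a y * g y ^ 2 ∂μ) - (∫ y, a y ∂μ)⁻¹ * (∫ y, a y * g y ∂μ) ^ 2 = 0 ↔
      ∃ c, ∀ᵐ y ∂μ, g y = c := by
  have haB : ∀ᵐ y ∂μ, |a y| ≤ |β| := by
    filter_upwards [hab] with y hy
    rw [abs_of_pos (hα.trans_le hy.1)]
    exact hy.2.trans (le_abs_self β)
  have hgB : ∀ᵐ y ∂μ, |g y| ≤ |C| := hC.mono fun y hy => hy.trans (le_abs_self C)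
  have hia : Integrable a μ := integrable_of_bdd hma haB
  have hiag : Integrable (fun y => a y * g y) μ := by
    refine integrable_of_bdd (hma.mul hmg) (B := |β| * |C|) ?_
    filter_upwards [haB, hgB] with y h1 h2
    rw [abs_mul]
    exact mul_le_mul h1 h2 (abs_nonneg _) (abs_nonneg _)
  have hiag2 : Integrable (fun y => a y * g y ^ 2) μ := by
    refine integrable_of_bdd (hma.mul (hmg.pow_const 2)) (B := |β| * |C| ^ 2) ?_
    filter_upwards [haB, hgB] with y h1 h2
    rw [abs_mul, abs_pow]
    exact mul_le_mul h1 (pow_le_pow_left₀ (abs_nonneg _) h2 2) (by positivity) (abs_nonneg _)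
  set I := ∫ y, a y ∂μ with hIdef
  set J := ∫ y, a y * g y ∂μ with hJdef
  set K := ∫ y, a y * g y ^ 2 ∂μ with hKdef
  have hI : 0 < I := by
    have h1 : ∫ (_ : ℝ), α ∂μ ≤ I :=
      integral_mono_ae (integrable_const α) hia (hab.mono fun y hy => hy.1)
    have h2 : ∫ (_ : ℝ), α ∂μ = α := by simp [integral_const, measureReal_def, hμ]
    linarith [hα]
  constructor
  · intro h
    set m := J / I with hmdef
    have hFeq : (fun y => a y * (g y - m) ^ 2) =
        fun y => a y * g y ^ 2 - (2 * m) * (a y * g y) + m ^ 2 * a y := by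
      funext y; ring
    have hiF : Integrable (fun y => a y * (g y - m) ^ 2) μ := by
      rw [hFeq]
      exact ((hiag2.sub (hiag.const_mul (2 * m))).add (hia.const_mul (m ^ 2)))
    have hInt : ∫ y, a y * (g y - m) ^ 2 ∂μ = K - 2 * m * J + m ^ 2 * I := by
      have hA : Integrable (fun y => a y * g y ^ 2 - 2 * m * (a y * g y)) μ :=
        hiag2.sub (hiag.const_mul (2 * m))
      have e1 := integral_add hA (hia.const_mul (m ^ 2))
      have e2 := integral_sub hiag2 (hiag.const_mul (2 * m))
      have e3 := integral_const_mul (μ := μ) (2 * m) (fun y => a y * g y)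
      have e4 := integral_const_mul (μ := μ) (m ^ 2) a
      rw [hFeq, e1, e2, e3, e4]
    have hm2 : K - 2 * m * J + m ^ 2 * I = K - I⁻¹ * J ^ 2 := by
      rw [hmdef]; field_simp; ring
    have hzero : ∫ y, a y * (g y - m) ^ 2 ∂μ = 0 := by
      rw [hInt, hm2, h]
    have hnn : 0 ≤ᵐ[μ] fun y => a y * (g y - m) ^ 2 := by
      filter_upwards [hab] with y hy
      have := hα.trans_le hy.1
      positivity
    have := (integral_eq_zero_iff_of_nonneg_ae hnn hiF).1 hzero
    refine ⟨m, ?_⟩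
    filter_upwards [this, hab] with y h0 hy
    have hapos : 0 < a y := hα.trans_le hy.1
    have : (g y - m) ^ 2 = 0 := by
      rcases mul_eq_zero.1 h0 with h' | h'
      · exact absurd h' hapos.ne'
      · exact h'
    have := pow_eq_zero_iff (n := 2) (by norm_num) |>.1 this
    linarith
  · rintro ⟨c, hc⟩
    have hK : K = c ^ 2 * I := by
      rw [hKdef, hIdef, ← integral_const_mul]
      exact integral_congr_ae (hc.mono fun y hy => by simp only []; rw [hy]; ring)
    have hJ : J = c * I := by
      rw [hJdef, hIdef, ← integral_const_mul]
      exact integral_congr_ae (hc.mono fun y hy => by simp only []; rw [hy]; ring)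
    rw [hK, hJ]
    field_simp
    ring

/-- Characterization of the vanishing of the magneto-resistance dissipation
difference matrix of a layered composite, according to the orientation of the
magnetic field (`u = h·ξ`, `v = |h×ξ|`). -/
theorem layered_difference_eq_zero_iff (α β : ℝ) (hα : 0 < α) (hαβ : α ≤ β)
    (a r : ℝ → ℝ) (ha : Measurable a) (hr : Measurable r)
    (haI : ∀ y ∈ Set.Ioo (0 : ℝ) 1, a y ∈ Set.Icc α β)
    (hrB : ∃ C : ℝ, ∀ᵐ y ∂(volume.restrict (Set.Ioo (0 : ℝ) 1)), |r y| ≤ C)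
    (u v : ℝ) :
    (!![dOne a r * v ^ 2, dThree a r * u * v, 0;
        dThree a r * u * v, dTwo a r * u ^ 2, 0;
        0, 0, dTwo a r * u ^ 2] : Matrix (Fin 3) (Fin 3) ℝ) = 0 ↔
      (u = 0 ∧ v = 0) ∨
      (u = 0 ∧ v ≠ 0 ∧ ∃ c : ℝ, ∀ᵐ y ∂(volume.restrict (Set.Ioo (0 : ℝ) 1)), r y = c) ∨
      (u ≠ 0 ∧ v = 0 ∧ ∃ c : ℝ, ∀ᵐ y ∂(volume.restrict (Set.Ioo (0 : ℝ) 1)), a y * r y = c) ∨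
      (u ≠ 0 ∧ v ≠ 0 ∧
        (∃ c : ℝ, ∀ᵐ y ∂(volume.restrict (Set.Ioo (0 : ℝ) 1)), r y = c) ∧
        (∃ c : ℝ, ∀ᵐ y ∂(volume.restrict (Set.Ioo (0 : ℝ) 1)), a y * r y = c)) := by
  set μ := volume.restrict (Set.Ioo (0 : ℝ) 1) with hμdef
  have hβ : 0 < β := hα.trans_le hαβ
  haveI : IsFiniteMeasure μ := by
    constructor
    rw [hμdef, Measure.restrict_apply MeasurableSet.univ]
    simp [Real.volume_Ioo]
  have hμ1 : (μ Set.univ).toReal = 1 := by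
    rw [hμdef, Measure.restrict_apply MeasurableSet.univ]
    simp [Real.volume_Ioo]
  have hab : ∀ᵐ y ∂μ, α ≤ a y ∧ a y ≤ β :=
    (ae_restrict_iff' measurableSet_Ioo).2
      (ae_of_all _ fun y hy => ⟨(haI y hy).1, (haI y hy).2⟩)
  obtain ⟨C, hC⟩ := hrB
  -- the ⟨a⟩ and ⟨a⁻¹⟩ averages are positive
  have hia : Integrable a μ :=
    integrable_of_bdd ha (hab.mono fun y hy => by
      rw [abs_of_pos (hα.trans_le hy.1)]; exact hy.2.trans (le_abs_self β))
  have hIpos : 0 < avg01 a := by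
    have h1 : ∫ (_ : ℝ), α ∂μ ≤ ∫ y, a y ∂μ :=
      integral_mono_ae (integrable_const α) hia (hab.mono fun y hy => hy.1)
    have h2 : ∫ (_ : ℝ), α ∂μ = α := by simp [integral_const, measureReal_def, hμ1]
    have : α ≤ avg01 a := by rw [avg01, ← hμdef]; linarith
    linarith
  have hiainv : Integrable (fun y => (a y)⁻¹) μ :=
    integrable_of_bdd ha.inv (hab.mono fun y hy => by
      rw [abs_of_pos (inv_pos.2 (hα.trans_le hy.1))]
      exact inv_anti₀ hα hy.1 |>.trans (le_abs_self _))
  have hJpos : 0 < avg01 (fun y => (a y)⁻¹) := by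
    have h1 : ∫ (_ : ℝ), β⁻¹ ∂μ ≤ ∫ y, (a y)⁻¹ ∂μ :=
      integral_mono_ae (integrable_const β⁻¹) hiainv
        (hab.mono fun y hy => inv_anti₀ (hα.trans_le hy.1) hy.2)
    have h2 : ∫ (_ : ℝ), β⁻¹ ∂μ = β⁻¹ := by simp [integral_const, measureReal_def, hμ1]
    have : β⁻¹ ≤ avg01 (fun y => (a y)⁻¹) := by rw [avg01, ← hμdef]; linarith
    have := inv_pos.2 hβ
    linarith
  -- d₁ = 0 ↔ r is a.e. constant
  have h1 : dOne a r = 0 ↔ ∃ c : ℝ, ∀ᵐ y ∂μ, r y = c := by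
    have hkey := variance_zero_iff μ a r ha hr α β C hα hab hC hμ1
    rw [dOne]
    constructor
    · intro h
      rcases mul_eq_zero.1 h with h' | h'
      · exact absurd h' (inv_ne_zero (pow_ne_zero 2 hJpos.ne'))
      · exact hkey.1 h'
    · intro h
      rw [show (avg01 fun y => a y * r y ^ 2) -
          (avg01 a)⁻¹ * (avg01 fun y => a y * r y) ^ 2 = 0 from hkey.2 h, mul_zero]
  -- d₂ = 0 ↔ a·r is a.e. constant
  have h2 : dTwo a r = 0 ↔ ∃ c : ℝ, ∀ᵐ y ∂μ, a y * r y = c := by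
    have hC' : ∀ᵐ y ∂μ, |a y * r y| ≤ |β| * |C| := by
      filter_upwards [hab, hC] with y hy hy'
      rw [abs_mul]
      refine mul_le_mul ?_ (hy'.trans (le_abs_self C)) (abs_nonneg _) (abs_nonneg _)
      rw [abs_of_pos (hα.trans_le hy.1)]; exact hy.2.trans (le_abs_self β)
    have hkey := variance_zero_iff μ a (fun y => a y * r y) ha (ha.mul hr)
      α β (|β| * |C|) hα hab hC' hμ1
    have e1 : avg01 (fun y => a y ^ 3 * r y ^ 2) =
        ∫ y, a y * (a y * r y) ^ 2 ∂μ := by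
      rw [avg01, ← hμdef]
      exact integral_congr_ae (ae_of_all _ fun y => by simp only []; ring)
    have e2 : avg01 (fun y => a y ^ 2 * r y) = ∫ y, a y * (a y * r y) ∂μ := by
      rw [avg01, ← hμdef]
      exact integral_congr_ae (ae_of_all _ fun y => by simp only []; ring)
    rw [dTwo, e1, e2]
    have : avg01 a = ∫ y, a y ∂μ := by rw [avg01, hμdef]
    rw [this]
    exact hkey
  -- a·r a.e. constant → d₃ = 0
  have h3 : (∃ c : ℝ, ∀ᵐ y ∂μ, a y * r y = c) → dThree a r = 0 := by
    rintro ⟨c, hc⟩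
    have e1 : avg01 (fun y => a y ^ 2 * r y ^ 2) = c ^ 2 := by
      rw [avg01, ← hμdef]
      have : ∫ y, a y ^ 2 * r y ^ 2 ∂μ = ∫ (_ : ℝ), c ^ 2 ∂μ :=
        integral_congr_ae (hc.mono fun y hy => by
          simp only []
          rw [show a y ^ 2 * r y ^ 2 = (a y * r y) ^ 2 by ring, hy])
      rw [this]; simp [integral_const, measureReal_def, hμ1]
    have e2 : avg01 (fun y => a y * r y) = c := by
      rw [avg01, ← hμdef]
      rw [integral_congr_ae (hc.mono fun y hy => by simpa using hy)]
      simp [integral_const, measureReal_def, hμ1]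
    have e3 : avg01 (fun y => a y ^ 2 * r y) = c * avg01 a := by
      rw [avg01, ← hμdef]
      have : ∫ y, a y ^ 2 * r y ∂μ = ∫ y, c * a y ∂μ :=
        integral_congr_ae (hc.mono fun y hy => by
          simp only []
          rw [show a y ^ 2 * r y = a y * (a y * r y) by ring, hy]; ring)
      rw [this, integral_const_mul, avg01, hμdef]
    rw [dThree, e1, e2, e3]
    have : c ^ 2 - (avg01 a)⁻¹ * c * (c * avg01 a) = 0 := by
      field_simp
      ring
    rw [this, mul_zero]
  constructor
  · intro h
    have h00 : dOne a r * v ^ 2 = 0 := by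
      have := congrFun (congrFun h 0) 0; simpa using this
    have h01 : dTwo a r * u ^ 2 = 0 := by
      have := congrFun (congrFun h 1) 1; simpa using this
    rcases eq_or_ne u 0 with hu | hu <;> rcases eq_or_ne v 0 with hv | hv
    · exact Or.inl ⟨hu, hv⟩
    · refine Or.inr (Or.inl ⟨hu, hv, h1.1 ?_⟩)
      rcases mul_eq_zero.1 h00 with h' | h'
      · exact h'
      · exact absurd h' (pow_ne_zero 2 hv)
    · refine Or.inr (Or.inr (Or.inl ⟨hu, hv, h2.1 ?_⟩))
      rcases mul_eq_zero.1 h01 with h' | h'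
      · exact h'
      · exact absurd h' (pow_ne_zero 2 hu)
    · refine Or.inr (Or.inr (Or.inr ⟨hu, hv, h1.1 ?_, h2.1 ?_⟩))
      · rcases mul_eq_zero.1 h00 with h' | h'
        · exact h'
        · exact absurd h' (pow_ne_zero 2 hv)
      · rcases mul_eq_zero.1 h01 with h' | h'
        · exact h'
        · exact absurd h' (pow_ne_zero 2 hu)
  · intro h
    have key : dOne a r * v ^ 2 = 0 ∧ dThree a r * u * v = 0 ∧ dTwo a r * u ^ 2 = 0 := by
      rcases h with ⟨hu, hv⟩ | ⟨hu, hv, hc⟩ | ⟨hu, hv, hc⟩ | ⟨hu, hv, hc, hc'⟩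
      · simp [hu, hv]
      · simp [hu, h1.2 hc]
      · simp [hv, h2.2 hc]
      · have d1 := h1.2 hc
        have d2 := h2.2 hc'
        have d3 := h3 hc'
        simp [d1, d2, d3]
    obtain ⟨k1, k2, k3⟩ := key
    ext i j
    fin_cases i <;> fin_cases j <;> simp [k1, k2, k3, Matrix.vecHead, Matrix.vecTail]
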